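/- arXiv:2107.03972 — 6 statements merged into one kernel-verified Lean document; each statement's English description precedes it below -/
import Mathlib

section
/- Fix a set 𝒞 of propositional connectives. Then FOCDS(𝒞) = FOCLS(𝒞) (i.e., a sequent of first-order formulas over 𝒞 is valid in all constant-domain Kripke models if and only if it is valid in all classical models) if and only if every connective in 𝒞 is monotonic. -/
open Classical


/-- First-order formulas over a set `C` of propositional connectives
(each `c : C` has arity `ar c`).  Individual variables and, for each arity `n`,
the `n`-ary predicate symbols are indexed by `ℕ`. -/
inductive Formula (C : Type) (ar : C → ℕ) : Type
  | atom (n : ℕ) (p : ℕ) (v : Fin n → ℕ)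
  | conn (c : C) (args : Fin (ar c) → Formula C ar)
  | all (x : ℕ) (φ : Formula C ar)
  | ex  (x : ℕ) (φ : Formula C ar)

/-- A classical first-order model: a nonempty domain `D` (a set in an ambient
type `U`) together with an interpretation of every `n`-ary predicate symbol. -/
structure CModel where
  U : Type
  D : Set U
  D_ne : D.Nonempty
  I : (n : ℕ) → ℕ → (Fin n → U) → Bool

/-- Classical interpretation of a formula (value in `{0,1}`, coded by `Bool`),
where `tf c` is the truth function of the connective `c`. -/
noncomputable def cVal {C : Type} {ar : C → ℕ}
    (tf : (c : C) → (Fin (ar c) → Bool) → Bool) (M : CModel) :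
    Formula C ar → (ℕ → M.U) → Bool
  | .atom n p v, ρ => M.I n p (fun i => ρ (v i))
  | .conn c args, ρ => tf c (fun i => cVal tf M (args i) ρ)
  | .all x φ, ρ => decide (∀ a ∈ M.D, cVal tf M φ (Function.update ρ x a) = true)
  | .ex x φ, ρ => decide (∃ a ∈ M.D, cVal tf M φ (Function.update ρ x a) = true)

/-- A first-order Kripke model: a nonempty preordered set of worlds `W`,
monotone nonempty domains `D w` (sets in an ambient type `U`), and hereditary
interpretations of the predicate symbols. -/
structure KModel where
  W : Type
  W_ne : Nonempty W
  R : W → W → Prop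
  refl : ∀ w, R w w
  trans : ∀ {w v u}, R w v → R v u → R w u
  U : Type
  D : W → Set U
  D_ne : ∀ w, (D w).Nonempty
  D_mono : ∀ {w v}, R w v → D w ⊆ D v
  I : W → (n : ℕ) → ℕ → (Fin n → U) → Bool
  hered : ∀ {w v}, R w v → ∀ n p (a : Fin n → U),
      (∀ i, a i ∈ D w) → I w n p a = true → I v n p a = true

/-- Kripke interpretation of a formula at a world (value in `{0,1}`). -/
noncomputable def kVal {C : Type} {ar : C → ℕ}
    (tf : (c : C) → (Fin (ar c) → Bool) → Bool) (K : KModel) :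
    Formula C ar → K.W → (ℕ → K.U) → Bool
  | .atom n p v, w, ρ => K.I w n p (fun i => ρ (v i))
  | .conn c args, w, ρ =>
      decide (∀ u, K.R w u → tf c (fun i => kVal tf K (args i) u ρ) = true)
  | .all x φ, w, ρ =>
      decide (∀ u, K.R w u → ∀ a ∈ K.D u,
        kVal tf K φ u (Function.update ρ x a) = true)
  | .ex x φ, w, ρ =>
      decide (∃ a ∈ K.D w, kVal tf K φ w (Function.update ρ x a) = true)

/-- A Kripke model has constant domains. -/
def ConstDom (K : KModel) : Prop := ∀ w v : K.W, K.D w = K.D v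

/-- The sequent `Γ ⟹ Δ` is valid in all classical models (`Γ ⟹ Δ ∈ FOCLS(𝒞)`):
at every classical model and assignment into the domain, its interpretation is 1,
i.e. it is never the case that everything in `Γ` gets 1 and everything in `Δ` gets 0. -/
def SeqCValid {C : Type} {ar : C → ℕ} (tf : (c : C) → (Fin (ar c) → Bool) → Bool)
    (Γ Δ : Set (Formula C ar)) : Prop :=
  ∀ M : CModel, ∀ ρ : ℕ → M.U, (∀ x, ρ x ∈ M.D) →
    ¬ ((∀ φ ∈ Γ, cVal tf M φ ρ = true) ∧ (∀ φ ∈ Δ, cVal tf M φ ρ = false))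

/-- The sequent `Γ ⟹ Δ` is valid in all constant-domain Kripke models
(`Γ ⟹ Δ ∈ FOCDS(𝒞)`). -/
def SeqCDValid {C : Type} {ar : C → ℕ} (tf : (c : C) → (Fin (ar c) → Bool) → Bool)
    (Γ Δ : Set (Formula C ar)) : Prop :=
  ∀ K : KModel, ConstDom K → ∀ w : K.W, ∀ ρ : ℕ → K.U, (∀ x, ρ x ∈ K.D w) →
    ¬ ((∀ φ ∈ Γ, kVal tf K φ w ρ = true) ∧ (∀ φ ∈ Δ, kVal tf K φ w ρ = false))

/-- A truth function is monotonic. -/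
def MonoTF {n : ℕ} (f : (Fin n → Bool) → Bool) : Prop :=
  ∀ a b : Fin n → Bool, (∀ i, a i ≤ b i) → f a ≤ f b

/-- Propositional formulas over `C`: built from propositional symbols
(indexed by `ℕ`) by the connectives in `C`. -/
inductive PFormula (C : Type) (ar : C → ℕ) : Type
  | atom (p : ℕ)
  | conn (c : C) (args : Fin (ar c) → PFormula C ar)

/-- Value of a propositional formula under a classical valuation `v`. -/
def pcVal {C : Type} {ar : C → ℕ} (tf : (c : C) → (Fin (ar c) → Bool) → Bool)
    (v : ℕ → Bool) : PFormula C ar → Bool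
  | .atom p => v p
  | .conn c args => tf c (fun i => pcVal tf v (args i))

/-- A propositional Kripke model. -/
structure PKModel where
  W : Type
  W_ne : Nonempty W
  R : W → W → Prop
  refl : ∀ w, R w w
  trans : ∀ {w v u}, R w v → R v u → R w u
  I : W → ℕ → Bool
  hered : ∀ {w v}, R w v → ∀ p, I w p = true → I v p = true

/-- Kripke interpretation of a propositional formula at a world. -/
noncomputable def pkVal {C : Type} {ar : C → ℕ}
    (tf : (c : C) → (Fin (ar c) → Bool) → Bool) (K : PKModel) :
    PFormula C ar → K.W → Bool
  | .atom p, w => K.I w p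
  | .conn c args, w =>
      decide (∀ u, K.R w u → tf c (fun i => pkVal tf K (args i) u) = true)

/-- The propositional sequent `Γ ⟹ Δ` is valid under all classical valuations
(`Γ ⟹ Δ ∈ CLS(𝒞)`). -/
def PSeqCValid {C : Type} {ar : C → ℕ} (tf : (c : C) → (Fin (ar c) → Bool) → Bool)
    (Γ Δ : Set (PFormula C ar)) : Prop :=
  ∀ v : ℕ → Bool,
    ¬ ((∀ φ ∈ Γ, pcVal tf v φ = true) ∧ (∀ φ ∈ Δ, pcVal tf v φ = false))

/-- The propositional sequent `Γ ⟹ Δ` is valid at all worlds of all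
propositional Kripke models (`Γ ⟹ Δ ∈ ILS(𝒞)`). -/
def PSeqKValid {C : Type} {ar : C → ℕ} (tf : (c : C) → (Fin (ar c) → Bool) → Bool)
    (Γ Δ : Set (PFormula C ar)) : Prop :=
  ∀ K : PKModel, ∀ w : K.W,
    ¬ ((∀ φ ∈ Γ, pkVal tf K φ w = true) ∧ (∀ φ ∈ Δ, pkVal tf K φ w = false))

/-- The formula `α` is classically valid (`α ∈ FOCL(𝒞)`). -/
def FmlCValid {C : Type} {ar : C → ℕ} (tf : (c : C) → (Fin (ar c) → Bool) → Bool)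
    (α : Formula C ar) : Prop :=
  ∀ M : CModel, ∀ ρ : ℕ → M.U, (∀ x, ρ x ∈ M.D) → cVal tf M α ρ = true

/-- The formula `α` is CD-valid (`α ∈ FOCD(𝒞)`): valid in all constant-domain
Kripke models. -/
def FmlCDValid {C : Type} {ar : C → ℕ} (tf : (c : C) → (Fin (ar c) → Bool) → Bool)
    (α : Formula C ar) : Prop :=
  ∀ K : KModel, ConstDom K → ∀ w : K.W, ∀ ρ : ℕ → K.U, (∀ x, ρ x ∈ K.D w) →
    kVal tf K α w ρ = true

/-- `α` is a propositional formula built only from propositional symbols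
(0-ary predicate symbols) and the connective `c`. -/
inductive IsPropC {C : Type} {ar : C → ℕ} (c : C) : Formula C ar → Prop
  | atom (p : ℕ) (v : Fin 0 → ℕ) : IsPropC c (.atom 0 p v)
  | conn (args : Fin (ar c) → Formula C ar) :
      (∀ i, IsPropC c (args i)) → IsPropC c (.conn c args)

/-- A propositional formula viewed as a first-order formula (propositional
symbols become 0-ary predicate symbols). -/
def PFormula.toFO {C : Type} {ar : C → ℕ} : PFormula C ar → Formula C ar
  | .atom p => .atom 0 p (fun i => i.elim0)
  | .conn c args => .conn c (fun i => (args i).toFO)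

/- ───────── auxiliary material for the proof of stmt_0 ───────── -/

lemma bool_le_iff (a b : Bool) : a ≤ b ↔ (a = true → b = true) := by
  cases a <;> cases b <;> decide

/-- Heredity of Kripke values (for assignments into the domain of `w`). -/
lemma kVal_hered {C : Type} {ar : C → ℕ}
    (tf : (c : C) → (Fin (ar c) → Bool) → Bool) (K : KModel)
    (φ : Formula C ar) : ∀ {w v : K.W} (ρ : ℕ → K.U), K.R w v →
      (∀ x, ρ x ∈ K.D w) → kVal tf K φ w ρ = true → kVal tf K φ v ρ = true := by
  induction φ with
  | atom n p vv =>
      intro w v ρ hwv hρ h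
      simp only [kVal] at h ⊢
      exact K.hered hwv n p _ (fun i => hρ _) h
  | conn c args ih =>
      intro w v ρ hwv hρ h
      simp only [kVal, decide_eq_true_eq] at h ⊢
      exact fun u hu => h u (K.trans hwv hu)
  | all x φ ih =>
      intro w v ρ hwv hρ h
      simp only [kVal, decide_eq_true_eq] at h ⊢
      exact fun u hu => h u (K.trans hwv hu)
  | ex x φ ih =>
      intro w v ρ hwv hρ h
      simp only [kVal, decide_eq_true_eq] at h ⊢
      obtain ⟨a, ha, hval⟩ := h
      refine ⟨a, K.D_mono hwv ha, ih _ hwv ?_ hval⟩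
      intro y
      rcases eq_or_ne y x with rfl | hy
      · simpa [Function.update_self] using ha
      · simpa [Function.update_of_ne hy] using hρ y

/-- On constant-domain models with monotone connectives, the Kripke value at a
world `w` coincides with the classical value in the model at `w`. -/
lemma kVal_eq_cVal {C : Type} {ar : C → ℕ}
    (tf : (c : C) → (Fin (ar c) → Bool) → Bool) (hm : ∀ c, MonoTF (tf c))
    (K : KModel) (hcd : ConstDom K) (w : K.W) (φ : Formula C ar) :
    ∀ ρ : ℕ → K.U, (∀ x, ρ x ∈ K.D w) →
      kVal tf K φ w ρ = cVal tf ⟨K.U, K.D w, K.D_ne w, K.I w⟩ φ ρ := by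
  induction φ with
  | atom n p vv => intro ρ hρ; rfl
  | conn c args ih =>
      intro ρ hρ
      simp only [kVal, cVal]
      rcases hv : tf c (fun i => cVal tf ⟨K.U, K.D w, K.D_ne w, K.I w⟩ (args i) ρ) with _ | _
      · -- classical value false: Kripke value must also be false (take u = w)
        rw [decide_eq_false_iff_not]
        intro hall
        have := hall w (K.refl w)
        have heq : (fun i => kVal tf K (args i) w ρ)
            = (fun i => cVal tf ⟨K.U, K.D w, K.D_ne w, K.I w⟩ (args i) ρ) := by
          funext i; exact ih i ρ hρ
        rw [heq, hv] at this
        exact Bool.false_ne_true this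
      · -- classical value true: by monotonicity and heredity, true at all u ⪰ w
        rw [decide_eq_true_eq]
        intro u hu
        have hle : ∀ i, cVal tf ⟨K.U, K.D w, K.D_ne w, K.I w⟩ (args i) ρ
            ≤ kVal tf K (args i) u ρ := by
          intro i
          rw [bool_le_iff]
          intro hi
          have hw : kVal tf K (args i) w ρ = true := by rw [ih i ρ hρ]; exact hi
          exact kVal_hered tf K (args i) ρ hu hρ hw
        have := hm c _ _ hle
        rw [hv, bool_le_iff] at this
        exact this rfl
  | all x φ ih =>
      intro ρ hρ
      simp only [kVal, cVal]
      rcases hv : decide (∀ a ∈ K.D w,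
          cVal tf ⟨K.U, K.D w, K.D_ne w, K.I w⟩ φ (Function.update ρ x a) = true)
          with _ | _
      · rw [decide_eq_false_iff_not] at hv
        rw [decide_eq_false_iff_not]
        intro hall
        apply hv
        intro a ha
        have := hall w (K.refl w) a ha
        rw [← ih (Function.update ρ x a) ?_]
        · exact this
        · intro y
          rcases eq_or_ne y x with rfl | hy
          · simpa [Function.update_self] using ha
          · simpa [Function.update_of_ne hy] using hρ y
      · rw [decide_eq_true_eq] at hv
        rw [decide_eq_true_eq]
        intro u hu a ha
        have haw : a ∈ K.D w := by rw [hcd w u]; exact ha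
        have hρ' : ∀ y, Function.update ρ x a y ∈ K.D w := by
          intro y
          rcases eq_or_ne y x with rfl | hy
          · simpa [Function.update_self] using haw
          · simpa [Function.update_of_ne hy] using hρ y
        have hw : kVal tf K φ w (Function.update ρ x a) = true := by
          rw [ih (Function.update ρ x a) hρ']
          exact hv a haw
        exact kVal_hered tf K φ _ hu hρ' hw
  | ex x φ ih =>
      intro ρ hρ
      simp only [kVal, cVal]
      rw [decide_eq_decide]
      constructor
      all_goals
        rintro ⟨a, ha, hval⟩
        refine ⟨a, ha, ?_⟩
        have hρ' : ∀ y, Function.update ρ x a y ∈ K.D w := by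
          intro y
          rcases eq_or_ne y x with rfl | hy
          · simpa [Function.update_self] using ha
          · simpa [Function.update_of_ne hy] using hρ y
        first
          | (rw [← ih (Function.update ρ x a) hρ']; exact hval)
          | (rw [ih (Function.update ρ x a) hρ']; exact hval)

/-- The one-world Kripke model associated with a classical model. -/
def CModel.toK (M : CModel) : KModel where
  W := Unit
  W_ne := ⟨()⟩
  R := fun _ _ => True
  refl := fun _ => trivial
  trans := fun _ _ => trivial
  U := M.U
  D := fun _ => M.D
  D_ne := fun _ => M.D_ne
  D_mono := fun _ => subset_rfl
  I := fun _ => M.I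
  hered := fun _ _ _ _ _ h => h

/-- The two-world Kripke countermodel built from a failure of monotonicity. -/
def cexK (n : ℕ) (a b : Fin n → Bool) (hab : ∀ i, a i ≤ b i) : KModel where
  W := Bool
  W_ne := ⟨false⟩
  R := (· ≤ ·)
  refl := le_refl
  trans := le_trans
  U := Unit
  D := fun _ => Set.univ
  D_ne := fun _ => ⟨(), trivial⟩
  D_mono := fun _ => subset_rfl
  I := fun w m p _ => if hp : p < n then (if w = true then b ⟨p, hp⟩ else a ⟨p, hp⟩) else false
  hered := by
    intro w v hwv m p f _ hI
    by_cases hp : p < n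
    · simp only [dif_pos hp] at hI ⊢
      cases w <;> cases v
      · exact hI
      · simp only [if_pos rfl]
        simp only [if_neg Bool.false_ne_true] at hI
        exact (bool_le_iff _ _).mp (hab _) hI
      · exact absurd hwv (by decide)
      · exact hI
    · simp only [dif_neg hp] at hI
      exact absurd hI Bool.false_ne_true

/-- `FOCDS(𝒞) = FOCLS(𝒞)` iff every connective in `𝒞` is monotonic. -/
theorem stmt_0 (C : Type) (ar : C → ℕ) (tf : (c : C) → (Fin (ar c) → Bool) → Bool) :
    (∀ Γ Δ : Set (Formula C ar), SeqCDValid tf Γ Δ ↔ SeqCValid tf Γ Δ) ↔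
      ∀ c : C, MonoTF (tf c) := by
  constructor
  · -- if FOCDS = FOCLS then all connectives are monotone
    intro h c
    by_contra hmono
    simp only [MonoTF, not_forall] at hmono
    obtain ⟨a, b, hab, hfab⟩ := hmono
    have key : tf c a = true ∧ tf c b = false := by
      rcases h1 : tf c a <;> rcases h2 : tf c b <;> simp_all
    -- the sequent
    set φ0 : Formula C ar :=
      Formula.conn c (fun i => Formula.atom 0 (i : ℕ) (fun j => j.elim0)) with hφ0
    set Γ : Set (Formula C ar) :=
      {ψ | ∃ i : Fin (ar c), a i = true ∧ ψ = Formula.atom 0 (i : ℕ) (fun j => j.elim0)}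
      with hΓdef
    set Δ : Set (Formula C ar) :=
      insert φ0 {ψ | ∃ i : Fin (ar c), a i = false ∧
        ψ = Formula.atom 0 (i : ℕ) (fun j => j.elim0)} with hΔdef
    -- it is classically valid
    have hcv : SeqCValid tf Γ Δ := by
      rintro M ρ hρ ⟨hΓ, hΔ⟩
      have hat : ∀ i : Fin (ar c),
          cVal tf M (Formula.atom 0 (i : ℕ) (fun j => j.elim0)) ρ = a i := by
        intro i
        rcases hai : a i
        · exact hΔ _ (Set.mem_insert_of_mem _ ⟨i, hai, rfl⟩)
        · exact hΓ _ ⟨i, hai, rfl⟩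
      have hfalse := hΔ φ0 (Set.mem_insert _ _)
      have hc : cVal tf M φ0 ρ = tf c a := by
        simp only [hφ0, cVal]
        congr 1
        funext i
        exact hat i
      rw [hfalse, key.1] at hc
      exact Bool.false_ne_true hc
    have hcdv : SeqCDValid tf Γ Δ := (h Γ Δ).mpr hcv
    -- but it fails in the two-world Kripke countermodel
    set K := cexK (ar c) a b hab with hK
    have hcdK : ConstDom K := fun _ _ => rfl
    have hIK : ∀ (i : Fin (ar c)) (w : Bool) (f : Fin 0 → Unit),
        K.I w 0 (i : ℕ) f = (if w = true then b i else a i) := by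
      intro i w f
      show (if hp : (i : ℕ) < ar c then
          (if w = true then b ⟨(i : ℕ), hp⟩ else a ⟨(i : ℕ), hp⟩) else false) = _
      rw [dif_pos i.isLt]
    refine hcdv K hcdK false (fun _ => ()) (fun _ => trivial) ⟨?_, ?_⟩
    · rintro ψ ⟨i, hai, rfl⟩
      simp only [kVal]
      simp [hIK, hai]
    · rintro ψ (rfl | ⟨i, hai, rfl⟩)
      · show kVal tf K φ0 false _ = false
        simp only [hφ0, kVal, decide_eq_false_iff_not]
        apply decide_eq_false
        intro hall
        have := hall true (Bool.false_le true)
        simp only [kVal, hIK] at this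
        simp [key.2] at this
      · simp only [kVal]
        simp [hIK, hai]
  · -- if all connectives are monotone then FOCDS = FOCLS
    intro hm Γ Δ
    constructor
    · -- CD-valid → classically valid, via the one-world model
      intro h M ρ hρ hcontra
      have hcd : ConstDom M.toK := fun _ _ => rfl
      refine h M.toK hcd () ρ hρ ⟨?_, ?_⟩
      · intro φ hφ
        rw [kVal_eq_cVal tf hm M.toK hcd () φ ρ hρ]
        exact hcontra.1 φ hφ
      · intro φ hφ
        rw [kVal_eq_cVal tf hm M.toK hcd () φ ρ hρ]
        exact hcontra.2 φ hφ
    · -- classically valid → CD-valid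
      intro h K hcd w ρ hρ hcontra
      refine h ⟨K.U, K.D w, K.D_ne w, K.I w⟩ ρ hρ ⟨?_, ?_⟩
      · intro φ hφ
        rw [← kVal_eq_cVal tf hm K hcd w φ ρ hρ]
        exact hcontra.1 φ hφ
      · intro φ hφ
        rw [← kVal_eq_cVal tf hm K hcd w φ ρ hρ]
        exact hcontra.2 φ hφ
end

section
/- If 𝒞 contains a non-monotonic connective, then FOCLS(𝒞) \ FOCDS(𝒞) ≠ ∅, i.e., there exists a sequent of first-order formulas over 𝒞 that is valid in all classical models but not valid in some constant-domain Kripke model. -/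
open Classical


/-- Two-world constant-domain Kripke model: atoms valued by `a` at the root,
by `b` at the other world. -/
def myK {n : ℕ} (a b : Fin n → Bool) (hab : ∀ i, a i ≤ b i) : KModel where
  W := Bool
  W_ne := ⟨false⟩
  R := (· ≤ ·)
  refl := le_refl
  trans := le_trans
  U := Unit
  D := fun _ => Set.univ
  D_ne := fun _ => ⟨(), trivial⟩
  D_mono := fun _ => subset_rfl
  I := fun w _ p _ => if h : p < n then (if w then b ⟨p, h⟩ else a ⟨p, h⟩) else false
  hered := by
    intro w v hwv m p x _ hx
    by_cases h : p < n
    · simp only [h, dif_pos] at hx ⊢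
      cases w <;> cases v <;> simp_all
      · have := hab ⟨p, h⟩
        rw [hx] at this
        exact le_antisymm (Bool.le_true _) this
      · exact absurd hwv (by decide)
    · simp [h] at hx

/-- if `𝒞` contains a non-monotonic connective then
`FOCLS(𝒞) \ FOCDS(𝒞) ≠ ∅`. -/
theorem stmt_2 (C : Type) (ar : C → ℕ) (tf : (c : C) → (Fin (ar c) → Bool) → Bool)
    (hnm : ∃ c : C, ¬ MonoTF (tf c)) :
    ∃ Γ Δ : Set (Formula C ar), SeqCValid tf Γ Δ ∧ ¬ SeqCDValid tf Γ Δ := by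
  obtain ⟨c, hc⟩ := hnm
  simp only [MonoTF, not_forall] at hc
  obtain ⟨a, b, hab, hfab⟩ := hc
  have hfa : tf c a = true := by
    cases h : tf c a <;> cases h' : tf c b <;> simp_all
  have hfb : tf c b = false := by
    cases h : tf c a <;> cases h' : tf c b <;> simp_all
  set A : Formula C ar := .conn c (fun i => .atom 0 i.val (fun j => j.elim0)) with hA
  refine ⟨{φ | ∃ i : Fin (ar c), a i = true ∧ φ = .atom 0 i.val (fun j => j.elim0)},
          insert A {φ | ∃ i : Fin (ar c), a i = false ∧ φ = .atom 0 i.val (fun j => j.elim0)},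
          ?_, ?_⟩
  · rintro M ρ hρ ⟨hΓ, hΔ⟩
    have hAval : cVal tf M A ρ = false := hΔ A (Set.mem_insert _ _)
    have hAc : cVal tf M A ρ = tf c a := by
      rw [hA]
      simp only [cVal]
      congr 1
      funext i
      cases hai : a i
      · exact hΔ _ (Set.mem_insert_of_mem _ ⟨i, hai, rfl⟩)
      · exact hΓ _ ⟨i, hai, rfl⟩
    rw [hAc, hfa] at hAval
    simp at hAval
  · intro hval
    have hatom : ∀ (w : Bool) (i : Fin (ar c)) (ρ : ℕ → Unit),
        kVal tf (myK a b hab) (.atom 0 i.val (fun j => j.elim0)) w ρ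
          = (if w then b i else a i) := by
      intro w i ρ
      simp [kVal, myK, i.isLt]
    have hAk : kVal tf (myK a b hab) A false (fun _ => ()) = false := by
      rw [hA]
      simp only [kVal, decide_eq_false_iff_not]
      refine decide_eq_false ?_; push_neg
      refine ⟨true, by simp [myK], ?_⟩
      have hb : (fun i : Fin (ar c) => (myK a b hab).I true 0 i.val (fun i => ())) = b := by
        funext i; simp [myK, i.isLt]
      rw [hb, hfb]
      simp
    refine hval (myK a b hab) (fun _ _ => rfl) false (fun _ => ())
      (fun _ => Set.mem_univ _) ⟨?_, ?_⟩
    · rintro φ ⟨i, hai, rfl⟩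
      rw [hatom]; simpa using hai
    · rintro φ (rfl | ⟨i, hai, rfl⟩)
      · exact hAk
      · rw [hatom]; simpa using hai
end

section
/- If all connectives in 𝒞 are monotonic, then a first-order formula over 𝒞 is valid in all constant-domain Kripke models if and only if it is valid in all classical models (i.e., FOCD(𝒞) = FOCL(𝒞)). -/
open Classical


/-- The classical model sitting at world `w` of a Kripke model. -/
def KModel.toC (K : KModel) (w : K.W) : CModel :=
  ⟨K.U, K.D w, K.D_ne w, K.I w⟩

lemma bool_le_of_imp {a b : Bool} (h : a = true → b = true) : a ≤ b := by
  cases a <;> simp_all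

lemma eq_true_of_le {a b : Bool} (h : a ≤ b) (ha : a = true) : b = true := by
  cases a <;> cases b <;> revert h ha <;> decide

/-- Monotonicity of the classical value along the accessibility relation. -/
lemma lemA {C : Type} {ar : C → ℕ} (tf : (c : C) → (Fin (ar c) → Bool) → Bool)
    (hmono : ∀ c : C, MonoTF (tf c)) (K : KModel) (hcd : ConstDom K) :
    ∀ (α : Formula C ar) (w v : K.W) (ρ : ℕ → K.U), (∀ x, ρ x ∈ K.D w) →
      K.R w v → cVal tf (K.toC w) α ρ = true → cVal tf (K.toC v) α ρ = true := by
  intro α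
  induction α with
  | atom n p vv =>
    intro w v ρ hρ hwv h
    exact K.hered hwv n p _ (fun i => hρ _) h
  | conn c args ih =>
    intro w v ρ hρ hwv h
    simp only [cVal] at h ⊢
    exact eq_true_of_le
      (hmono c _ _ (fun i => bool_le_of_imp (ih i w v ρ hρ hwv))) h
  | all x φ ih =>
    intro w v ρ hρ hwv h
    simp only [cVal.eq_3, KModel.toC, decide_eq_true_eq] at h ⊢
    intro a ha
    have ha' : a ∈ K.D w := (hcd v w) ▸ ha
    refine ih w v _ (fun y => ?_) hwv (h a ha')
    by_cases hy : y = x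
    · subst hy; simpa using ha'
    · simpa [Function.update, hy] using hρ y
  | ex x φ ih =>
    intro w v ρ hρ hwv h
    simp only [cVal.eq_4, KModel.toC, decide_eq_true_eq] at h ⊢
    obtain ⟨a, ha, hval⟩ := h
    refine ⟨a, (show a ∈ K.D v from (hcd w v) ▸ ha), ih w v _ (fun y => ?_) hwv hval⟩
    by_cases hy : y = x
    · subst hy; simpa using ha
    · simpa [Function.update, hy] using hρ y

/-- In a constant-domain Kripke model with monotone connectives, the Kripke
value at `w` coincides with the classical value in the model at `w`. -/
lemma lemB {C : Type} {ar : C → ℕ} (tf : (c : C) → (Fin (ar c) → Bool) → Bool)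
    (hmono : ∀ c : C, MonoTF (tf c)) (K : KModel) (hcd : ConstDom K) :
    ∀ (α : Formula C ar) (w : K.W) (ρ : ℕ → K.U), (∀ x, ρ x ∈ K.D w) →
      kVal tf K α w ρ = cVal tf (K.toC w) α ρ := by
  intro α
  induction α with
  | atom n p vv => intro w ρ hρ; rfl
  | conn c args ih =>
    intro w ρ hρ
    simp only [kVal, cVal]
    have key : ∀ u, K.R w u → ∀ i,
        kVal tf K (args i) u ρ = cVal tf (K.toC u) (args i) ρ := by
      intro u hu i
      exact ih i u ρ (fun y => (hcd w u) ▸ hρ y)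
    rcases h : tf c (fun i => cVal tf (K.toC w) (args i) ρ) with _ | _
    · -- RHS false: show LHS false, by instantiating u := w
      simp only [decide_eq_false_iff_not]
      intro hall
      have := hall w (K.refl w)
      rw [show (fun i => kVal tf K (args i) w ρ)
            = (fun i => cVal tf (K.toC w) (args i) ρ)
          from funext (fun i => key w (K.refl w) i)] at this
      rw [h] at this; exact Bool.false_ne_true this
    · -- RHS true: every u ⪰ w also true by monotonicity
      simp only [decide_eq_true_eq]
      intro u hu
      rw [show (fun i => kVal tf K (args i) u ρ)
            = (fun i => cVal tf (K.toC u) (args i) ρ)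
          from funext (fun i => key u hu i)]
      exact eq_true_of_le
        (hmono c _ _ (fun i => bool_le_of_imp
          (lemA tf hmono K hcd (args i) w u ρ hρ hu))) h
  | all x φ ih =>
    intro w ρ hρ
    simp only [kVal, cVal, KModel.toC]
    congr 1
    apply propext
    constructor
    · intro h a ha
      have := h w (K.refl w) a ha
      rwa [ih w _ (fun y => ?_) ] at this
      by_cases hy : y = x
      · subst hy; rw [Function.update_self]; exact ha
      · simpa [Function.update, hy] using hρ y
    · intro h u hu a ha
      have ha' : a ∈ K.D w := (hcd u w) ▸ ha
      have hupd : ∀ y, Function.update ρ x a y ∈ K.D w := by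
        intro y
        by_cases hy : y = x
        · subst hy; simpa using ha'
        · simpa [Function.update, hy] using hρ y
      have := lemA tf hmono K hcd φ w u _ hupd hu (h a ha')
      rw [ih u _ (fun y => (hcd w u) ▸ hupd y)]
      exact this
  | ex x φ ih =>
    intro w ρ hρ
    simp only [kVal, cVal, KModel.toC]
    congr 1
    apply propext
    have hupd : ∀ a, a ∈ K.D w → ∀ y, Function.update ρ x a y ∈ K.D w := by
      intro a ha y
      by_cases hy : y = x
      · subst hy; simpa using ha
      · simpa [Function.update, hy] using hρ y
    constructor
    · rintro ⟨a, ha, hval⟩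
      exact ⟨a, ha, Eq.trans (ih w _ (hupd a ha)).symm hval⟩
    · rintro ⟨a, ha, hval⟩
      exact ⟨a, ha, Eq.trans (ih w _ (hupd a ha)) hval⟩

/-- if all connectives in `𝒞` are monotonic then
`FOCD(𝒞) = FOCL(𝒞)`. -/
theorem stmt_6 (C : Type) (ar : C → ℕ) (tf : (c : C) → (Fin (ar c) → Bool) → Bool)
    (hmono : ∀ c : C, MonoTF (tf c)) :
    ∀ α : Formula C ar, FmlCDValid tf α ↔ FmlCValid tf α := by
  intro α
  constructor
  · intro h M ρ hρ
    let K : KModel :=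
      { W := PUnit, W_ne := ⟨⟨⟩⟩, R := fun _ _ => True,
        refl := fun _ => trivial, trans := fun _ _ => trivial,
        U := M.U, D := fun _ => M.D, D_ne := fun _ => M.D_ne,
        D_mono := fun _ => subset_rfl, I := fun _ => M.I,
        hered := fun _ _ _ _ _ hv => hv }
    have hk := h K (fun _ _ => rfl) ⟨⟩ ρ hρ
    have hb := lemB tf hmono K (fun _ _ => rfl) α ⟨⟩ ρ hρ
    rw [hb] at hk
    exact hk
  · intro h K hcd w ρ hρ
    rw [lemB tf hmono K hcd α w ρ hρ]
    exact h (K.toC w) ρ hρ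
end

section
/- (Propositional case.) If 𝒞 contains a non-monotonic connective, then CLS(𝒞) \ ILS(𝒞) ≠ ∅: there exists a sequent of propositional formulas over 𝒞 that is valid in all classical valuations but not valid in some propositional Kripke model. -/
open Classical


/-- propositional case: if `𝒞` contains a non-monotonic
connective then `CLS(𝒞) \ ILS(𝒞) ≠ ∅`. -/
theorem stmt_7 (C : Type) (ar : C → ℕ) (tf : (c : C) → (Fin (ar c) → Bool) → Bool)
    (hnm : ∃ c : C, ¬ MonoTF (tf c)) :
    ∃ Γ Δ : Set (PFormula C ar), PSeqCValid tf Γ Δ ∧ ¬ PSeqKValid tf Γ Δ := by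
  obtain ⟨c, hc⟩ := hnm
  rw [MonoTF] at hc
  push_neg at hc
  obtain ⟨a, b, hab, hfab⟩ := hc
  rw [Bool.lt_iff] at hfab
  obtain ⟨hb, ha⟩ := hfab
  -- index of the atom used for argument i
  set idx : Fin (ar c) → ℕ := fun i => if a i then 0 else if b i then 2 else 1 with hidx
  set φ : PFormula C ar := .conn c (fun i => .atom (idx i)) with hφ
  refine ⟨{.atom 0}, {.atom 1, .atom 2, φ}, ?_, ?_⟩
  · rintro v ⟨h1, h2⟩
    have hv0 : v 0 = true := h1 _ rfl
    have hv1 : v 1 = false := h2 (.atom 1) (by simp)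
    have hv2 : v 2 = false := h2 (.atom 2) (by simp)
    have hφf : pcVal tf v φ = false := h2 φ (by simp)
    have : pcVal tf v φ = tf c a := by
      simp only [hφ, pcVal]
      congr 1
      funext i
      simp only [pcVal, hidx]
      by_cases hai : a i
      · simp [hai, hv0]
      · by_cases hbi : b i
        · simp [hai, hbi, hv2]
        · simp [hai, hbi, hv1]
    rw [this, ha] at hφf
    simp at hφf
  · intro hval
    set K : PKModel :=
      { W := Bool
        W_ne := ⟨false⟩
        R := fun w v => w ≤ v
        refl := le_refl
        trans := le_trans
        I := fun w p => if p = 0 then true else if p = 2 then w else false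
        hered := by
          intro w v hwv p hp
          by_cases h0 : p = 0
          · simp [h0]
          · by_cases h2 : p = 2
            · simp [h0, h2] at hp ⊢
              exact le_antisymm (Bool.le_true v) (hp ▸ hwv)
            · simp [h0, h2] at hp } with hK
    have hatom : ∀ (p : ℕ) (w : Bool), pkVal tf K (PFormula.atom p) w = K.I w p := by
      intro p w; rfl
    have hvec : ∀ w : Bool, (fun i => pkVal tf K (PFormula.atom (idx i)) w)
        = (if w then b else a) := by
      intro w
      funext i
      rw [hatom]
      simp only [hK, hidx]
      by_cases hai : a i
      · have hbi : b i = true := le_trans (hai ▸ le_refl _) (hab i) |>.antisymm (Bool.le_true _) |>.symm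
        cases w <;> simp [hai, hbi] <;> rfl
      · by_cases hbi : b i
        · cases w <;> simp [hai, hbi] <;> rfl
        · cases w <;> simp [hai, hbi] <;> rfl
    have hφw : ∀ w : Bool, pkVal tf K φ w = false := by
      intro w
      simp only [hφ, pkVal]
      refine @decide_eq_false _ (propDecidable _) ?_
      intro h
      have h2 : (tf c fun i => if idx i = 0 then true else if idx i = 2 then true else false) = true := h true (Bool.le_true w)
      have hvb : (fun i => if idx i = 0 then true else if idx i = 2 then true else false) = b := by
        funext i
        simp only [hidx]
        by_cases hai : a i
        · have hbi : b i = true := Bool.le_iff_imp.mp (hab i) hai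
          simp [hai, hbi]
        · by_cases hbi : b i
          · simp [hai, hbi]
          · simp [hai, hbi]
      rw [hvb, hb] at h2
      exact Bool.false_ne_true h2
    refine hval K false ⟨?_, ?_⟩
    · rintro ψ rfl
      rw [hatom]; rfl
    · intro ψ hψ
      rcases hψ with rfl | rfl | rfl
      · rw [hatom]; rfl
      · rw [hatom]; rfl
      · exact hφw false
end

section
/- Let c ∈ 𝒞 be a non-monotonic connective with f_c(0,…,0) = f_c(1,…,1) = 1. Then there exists a propositional formula φ over 𝒞 (built only from propositional symbols and c) such that φ is valid in all classical models but not valid in some constant-domain Kripke model; in particular the sequent ⟹ φ belongs to FOCLS(𝒞) \ FOCDS(𝒞). -/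
open Classical


section Stmt13Aux

variable {C : Type} {ar : C → ℕ}

/-- The slot-filling tuple: `1` on the slots where `a` is true, `y` on the slots
where `b` (but not `a`) is true, `x` elsewhere. -/
def vtup {n : ℕ} (a b : Fin n → Bool) (x y : Bool) : Fin n → Bool :=
  fun i => if a i then true else if b i then y else x

/-- Propositional symbol `p` as a first-order formula. -/
def FP (C : Type) (ar : C → ℕ) (p : ℕ) : Formula C ar :=
  .atom 0 p (fun i => i.elim0)

/-- A "verum" formula built from `c`. -/
def FTop (c : C) : Formula C ar := .conn c (fun _ => FP C ar 0)

/-- Derived binary connective: plug `α` into the slots where `a = b = 0`,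
`β` into the slots where `a = 0, b = 1`, and verum into the slots where `a = 1`. -/
def FG (c : C) (a b : Fin (ar c) → Bool) (α β : Formula C ar) : Formula C ar :=
  .conn c (fun i => if a i then FTop c else if b i then β else α)

theorem isPropC_FP (c : C) (p : ℕ) : IsPropC (ar := ar) c (FP C ar p) :=
  IsPropC.atom p _

theorem isPropC_FTop (c : C) : IsPropC (ar := ar) c (FTop c) :=
  IsPropC.conn _ (fun _ => isPropC_FP c 0)

theorem isPropC_FG (c : C) (a b : Fin (ar c) → Bool) {α β : Formula C ar}
    (hα : IsPropC c α) (hβ : IsPropC c β) : IsPropC c (FG c a b α β) := by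
  refine IsPropC.conn _ (fun i => ?_)
  by_cases h1 : a i = true
  · simp only [h1, if_true]; exact isPropC_FTop c
  · by_cases h2 : b i = true
    · simp only [h1, h2, if_false, if_true]; exact hβ
    · simp only [h1, h2, if_false]; exact hα

variable (tf : (c : C) → (Fin (ar c) → Bool) → Bool) {c : C}

theorem cVal_FTop (h0 : tf c (fun _ => false) = true) (h1 : tf c (fun _ => true) = true)
    (M : CModel) (ρ : ℕ → M.U) : cVal tf M (FTop c) ρ = true := by
  show tf c (fun _ => cVal tf M (FP C ar 0) ρ) = true
  cases h : cVal tf M (FP C ar 0) ρ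
  · exact h0
  · exact h1

theorem cVal_FG (h0 : tf c (fun _ => false) = true) (h1 : tf c (fun _ => true) = true)
    (M : CModel) (ρ : ℕ → M.U) (a b : Fin (ar c) → Bool)
    (α β : Formula C ar) :
    cVal tf M (FG c a b α β) ρ
      = tf c (vtup a b (cVal tf M α ρ) (cVal tf M β ρ)) := by
  show tf c (fun i => cVal tf M (if a i then FTop c else if b i then β else α) ρ) = _
  congr 1
  funext i
  cases ha : a i <;> cases hb : b i <;>
    simp [vtup, ha, hb, cVal_FTop tf h0 h1]

theorem kVal_FTop (h0 : tf c (fun _ => false) = true) (h1 : tf c (fun _ => true) = true)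
    (K : KModel) (w : K.W) (ρ : ℕ → K.U) :
    kVal tf K (FTop c) w ρ = true := by
  show decide (∀ u, K.R w u → tf c (fun _ => kVal tf K (FP C ar 0) u ρ) = true) = true
  refine decide_eq_true (fun u _ => ?_)
  cases h : kVal tf K (FP C ar 0) u ρ
  · exact h0
  · exact h1

theorem kVal_FP (K : KModel) (p : ℕ) (w : K.W) (ρ : ℕ → K.U) :
    kVal tf K (FP C ar p) w ρ = K.I w 0 p (fun i => ρ (i.elim0)) := by
  simp [kVal, FP]

theorem kVal_FG (h0 : tf c (fun _ => false) = true) (h1 : tf c (fun _ => true) = true)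
    (K : KModel) (w : K.W) (ρ : ℕ → K.U) (a b : Fin (ar c) → Bool)
    (α β : Formula C ar) :
    kVal tf K (FG c a b α β) w ρ
      = decide (∀ u, K.R w u →
          tf c (vtup a b (kVal tf K α u ρ) (kVal tf K β u ρ)) = true) := by
  have key : ∀ u : K.W,
      (fun i => kVal tf K (if a i then FTop c else if b i then β else α) u ρ)
        = vtup a b (kVal tf K α u ρ) (kVal tf K β u ρ) := by
    intro u
    funext i
    cases ha : a i <;> cases hb : b i <;>
      simp [vtup, ha, hb, kVal_FTop tf h0 h1]
  show decide (∀ u, K.R w u →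
      tf c (fun i => kVal tf K (if a i then FTop c else if b i then β else α) u ρ)
        = true) = _
  simp only [key]

/-- The two-world constant-domain Kripke countermodel: worlds `false ⪯ true`,
domain `Unit`, and the propositional symbol `1` true exactly at world `true`. -/
def KCM : KModel where
  W := Bool
  W_ne := ⟨false⟩
  R := fun w v => w ≤ v
  refl := fun w => le_refl w
  trans := fun h h' => le_trans h h'
  U := Unit
  D := fun _ => Set.univ
  D_ne := fun _ => ⟨(), Set.mem_univ ()⟩
  D_mono := fun _ => Set.Subset.rfl
  I := fun w _ p _ => w && decide (p = 1)
  hered := by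
    intro w v hwv n p aa _ h
    simp only [Bool.and_eq_true] at h ⊢
    refine ⟨?_, h.2⟩
    cases v
    · rw [h.1] at hwv; exact absurd hwv (by decide)
    · rfl

end Stmt13Aux

/-- if `c` is non-monotonic with `f_c(0,…,0) = f_c(1,…,1) = 1`,
then some propositional formula `φ` built only from propositional symbols and
`c` is classically valid but not CD-valid; in particular
`⟹ φ ∈ FOCLS(𝒞) \ FOCDS(𝒞)`. -/
theorem stmt_13 (C : Type) (ar : C → ℕ) (tf : (c : C) → (Fin (ar c) → Bool) → Bool)
    (c : C) (hnm : ¬ MonoTF (tf c))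
    (h0 : tf c (fun _ => false) = true) (h1 : tf c (fun _ => true) = true) :
    ∃ φ : Formula C ar, IsPropC c φ ∧
      FmlCValid tf φ ∧ ¬ FmlCDValid tf φ ∧
      SeqCValid tf (∅ : Set (Formula C ar)) {φ} ∧
      ¬ SeqCDValid tf (∅ : Set (Formula C ar)) {φ} := by
  classical
  -- Extract a pointwise-≤ pair witnessing non-monotonicity.
  simp only [MonoTF, not_forall] at hnm
  obtain ⟨a, b, hab, hfab⟩ := hnm
  have ha : tf c a = true := by
    cases h : tf c a
    · exact absurd (h ▸ Bool.false_le _) hfab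
    · rfl
  have hb : tf c b = false := by
    cases h : tf c b
    · rfl
    · exact absurd (h ▸ Bool.le_true _) hfab
  -- Values of the derived binary truth function g x y := tf c (vtup a b x y).
  have hv00 : vtup a b false false = a := by
    funext i
    cases h : a i <;> cases h' : b i <;> simp [vtup, h, h']
  have hv11 : vtup a b true true = fun _ => true := by
    funext i
    cases h : a i <;> cases h' : b i <;> simp [vtup, h, h']
  have hv01 : vtup a b false true = b := by
    funext i
    cases h : a i
    · cases h' : b i <;> simp [vtup, h, h']
    · have := hab i
      rw [h] at this
      have hbi : b i = true := by
        cases h' : b i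
        · rw [h'] at this; exact absurd this (by decide)
        · rfl
      simp [vtup, h, hbi]
  have g00 : tf c (vtup a b false false) = true := by rw [hv00]; exact ha
  have g11 : tf c (vtup a b true true) = true := by rw [hv11]; exact h1
  have g01 : tf c (vtup a b false true) = false := by rw [hv01]; exact hb
  -- The formula, with middle atom depending on the unknown value g 1 0.
  set Pf : Formula C ar := FP C ar 0 with hPf
  set Qf : Formula C ar := FP C ar 1 with hQf
  set Zf : Formula C ar := if tf c (vtup a b true false) = true then Qf else Pf with hZf
  set φ : Formula C ar := FG c a b Qf (FG c a b Zf (FG c a b Pf Qf)) with hφ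
  have hpropZ : IsPropC c Zf := by
    rw [hZf]; split
    · exact isPropC_FP c 1
    · exact isPropC_FP c 0
  have hprop : IsPropC c φ :=
    isPropC_FG c a b (isPropC_FP c 1)
      (isPropC_FG c a b hpropZ (isPropC_FG c a b (isPropC_FP c 0) (isPropC_FP c 1)))
  -- Classical validity.
  have hCV : FmlCValid tf φ := by
    intro M ρ _
    have hz : cVal tf M Zf ρ
        = if tf c (vtup a b true false) = true then cVal tf M Qf ρ else cVal tf M Pf ρ := by
      rw [hZf]; split <;> rfl
    rw [hφ, cVal_FG tf h0 h1, cVal_FG tf h0 h1, cVal_FG tf h0 h1, hz]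
    cases hε : tf c (vtup a b true false) <;>
      cases hx : cVal tf M Pf ρ <;> cases hy : cVal tf M Qf ρ <;>
        first
          | exact g11 | exact g00 | exact hε
          | (first | simp only [hx, hy, hε, g00, g11, g01, Bool.false_eq_true,
                if_false, if_true, reduceIte] | skip) <;>
            first
              | rfl | exact g11 | exact g00 | exact hε
              | simp [hx, hy, hε, g00, g11, g01]
  -- The Kripke countermodel computations.
  have hkP : ∀ (w : KCM.W) (ρ : ℕ → KCM.U),
      kVal tf KCM Pf w ρ = false := by
    intro w ρ
    rw [hPf, kVal_FP]
    show (w && decide ((0 : ℕ) = 1)) = false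
    simp
    exact Bool.and_false w
  have hkQ : ∀ (w : KCM.W) (ρ : ℕ → KCM.U),
      kVal tf KCM Qf w ρ = w := by
    intro w ρ
    rw [hQf, kVal_FP]
    show (w && decide ((1 : ℕ) = 1)) = w
    simp
    exact Bool.and_true w
  have hk1 : ∀ (w : KCM.W) (ρ : ℕ → KCM.U),
      kVal tf KCM (FG c a b Pf Qf) w ρ = false := by
    intro w ρ
    rw [kVal_FG tf h0 h1]
    refine decide_eq_false ?_
    intro h
    have := h true (Bool.le_true w)
    erw [hkP, hkQ] at this
    rw [g01] at this
    exact Bool.false_ne_true this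
  have hk2 : ∀ (w : KCM.W) (ρ : ℕ → KCM.U),
      kVal tf KCM (FG c a b Zf (FG c a b Pf Qf)) w ρ = true := by
    intro w ρ
    rw [kVal_FG tf h0 h1]
    refine decide_eq_true ?_
    intro u _
    rw [hk1]
    rw [hZf]
    by_cases hε : tf c (vtup a b true false) = true
    · rw [if_pos hε, hkQ]
      cases u
      · exact g00
      · exact hε
    · rw [if_neg hε, hkP]
      exact g00
  have hkφ : ∀ (ρ : ℕ → KCM.U),
      kVal tf KCM φ false ρ = false := by
    intro ρ
    erw [hφ, kVal_FG tf h0 h1]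
    refine decide_eq_false ?_
    intro h
    have := h false (le_refl false)
    erw [hkQ, hk2] at this
    rw [g01] at this
    exact Bool.false_ne_true this
  have hCD : ConstDom KCM := fun _ _ => rfl
  have hρmem : ∀ x : ℕ, (fun _ : ℕ => ()) x ∈ KCM.D false :=
    fun _ => Set.mem_univ _
  refine ⟨φ, hprop, hCV, ?_, ?_, ?_⟩
  · intro h
    have := h KCM hCD false (fun _ => ()) hρmem
    erw [hkφ] at this
    exact Bool.false_ne_true this
  · intro M ρ hρ ⟨_, h2⟩
    have := h2 φ (Set.mem_singleton φ)
    rw [hCV M ρ hρ] at this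
    exact absurd this (by decide)
  · intro h
    refine h KCM hCD false (fun _ => ()) hρmem ⟨?_, ?_⟩
    · intro ψ hψ
      exact absurd hψ (Set.notMem_empty ψ)
    · intro ψ hψ
      rw [Set.mem_singleton_iff] at hψ
      rw [hψ]
      exact hkφ _
end

section
/- Let c ∈ 𝒞 be a non-monotonic connective with f_c(0,…,0) = 0 and f_c(1,…,1) = 1. Then there exist propositional formulas φ and χ over 𝒞 (built only from propositional symbols and c) such that the sequent φ ⟹ χ is valid in all classical models but not valid in some constant-domain Kripke model; i.e., φ ⟹ χ ∈ FOCLS(𝒞) \ FOCDS(𝒞). -/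
open Classical


namespace Stmt14Aux

/-- The propositional symbol `p` as a first-order formula. -/
def At (C : Type) (ar : C → ℕ) (p : ℕ) : Formula C ar := .atom 0 p (fun i => i.elim0)

/-- The ternary macro: apply `c` with `z` at position `j`, `x` at the positions
where `a` is true, `y` elsewhere. -/
def mkK {C : Type} {ar : C → ℕ} (c : C) (a : Fin (ar c) → Bool) (j : Fin (ar c))
    (x y z : Formula C ar) : Formula C ar :=
  .conn c (fun i => if i = j then z else if a i then x else y)

lemma isPropC_At {C : Type} {ar : C → ℕ} (c : C) (p : ℕ) : IsPropC c (At C ar p) :=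
  IsPropC.atom p _

lemma isPropC_mkK {C : Type} {ar : C → ℕ} {c : C} (a : Fin (ar c) → Bool) (j : Fin (ar c))
    {x y z : Formula C ar} (hx : IsPropC c x) (hy : IsPropC c y) (hz : IsPropC c z) :
    IsPropC c (mkK c a j x y z) := by
  refine IsPropC.conn _ fun i => ?_
  split_ifs with h h2
  · exact hz
  · exact hx
  · exact hy

lemma vecA {n : ℕ} (a : Fin n → Bool) (j : Fin n) (haj : a j = false) :
    (fun i => if i = j then false else if a i then true else false) = a := by
  funext i
  by_cases h : i = j
  · simp [h, haj]
  · simp only [h, if_neg, if_false]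
    cases a i <;> simp

lemma vecB {n : ℕ} (a : Fin n → Bool) (j : Fin n) :
    (fun i => if i = j then true else if a i then true else false)
      = Function.update a j true := by
  funext i
  by_cases h : i = j
  · subst h; simp
  · simp only [h, Function.update_of_ne h, if_false]
    cases a i <;> simp

lemma vecT {n : ℕ} (a : Fin n → Bool) (j : Fin n) :
    (fun i => if i = j then true else if a i then true else true)
      = (fun _ => true) := by
  funext i
  by_cases h : i = j <;> simp [h]

lemma cVal_mkK {C : Type} {ar : C → ℕ} (tf : (c : C) → (Fin (ar c) → Bool) → Bool)
    (M : CModel) (c : C) (a : Fin (ar c) → Bool) (j : Fin (ar c))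
    (x y z : Formula C ar) (ρ : ℕ → M.U) :
    cVal tf M (mkK c a j x y z) ρ =
      tf c (fun i => if i = j then cVal tf M z ρ
        else if a i then cVal tf M x ρ else cVal tf M y ρ) := by
  simp only [mkK, cVal]
  congr 1
  funext i
  by_cases h : i = j
  · simp [h]
  · by_cases h2 : a i <;> simp [h, h2]

lemma kVal_mkK {C : Type} {ar : C → ℕ} (tf : (c : C) → (Fin (ar c) → Bool) → Bool)
    (K : KModel) (c : C) (a : Fin (ar c) → Bool) (j : Fin (ar c))
    (x y z : Formula C ar) (w : K.W) (ρ : ℕ → K.U) :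
    kVal tf K (mkK c a j x y z) w ρ =
      decide (∀ u, K.R w u → tf c (fun i => if i = j then kVal tf K z u ρ
        else if a i then kVal tf K x u ρ else kVal tf K y u ρ) = true) := by
  have h : ∀ u : K.W,
      (fun i => kVal tf K ((fun i => if i = j then z else if a i then x else y) i) u ρ)
        = fun i => if i = j then kVal tf K z u ρ
            else if a i then kVal tf K x u ρ else kVal tf K y u ρ := by
    intro u
    funext i
    by_cases h : i = j
    · simp [h]
    · by_cases h2 : a i <;> simp [h, h2]
  simp only [mkK, kVal]
  rw [decide_eq_decide]
  constructor
  · intro hh u hu; rw [← h u]; exact hh u hu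
  · intro hh u hu; rw [h u]; exact hh u hu

/-- The two-world constant-domain Kripke countermodel: worlds `false ⪯ true`,
atom 0 (`q`) true everywhere, atom 2 (`p`) true only at the top world, all
other atoms false everywhere. -/
def KM : KModel where
  W := Bool
  W_ne := ⟨false⟩
  R := fun w v => w ≤ v
  refl := fun w => le_refl w
  trans := fun h h' => le_trans h h'
  U := Unit
  D := fun _ => Set.univ
  D_ne := fun _ => ⟨(), trivial⟩
  D_mono := fun _ => subset_rfl
  I := fun w _ p _ => if p = 2 then w else decide (p = 0)
  hered := by
    intro w v hwv n p b _ h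
    by_cases hp : p = 2
    · simp only [hp, if_pos] at h ⊢
      cases w
      · cases h
      · cases v
        · exact absurd hwv (by decide)
        · rfl
    · simpa [hp] using h

attribute [reducible] KM

lemma kAt {C : Type} {ar : C → ℕ} (tf : (c : C) → (Fin (ar c) → Bool) → Bool)
    (k : ℕ) (u : Bool) (ρ : ℕ → Unit) :
    kVal (C := C) (ar := ar) tf KM (At C ar k) u ρ = if k = 2 then u else decide (k = 0) :=
  rfl

lemma exists_adjacent {n : ℕ} (f : (Fin n → Bool) → Bool) :
    ∀ (k : ℕ) (a b : Fin n → Bool),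
      (Finset.univ.filter (fun i => a i ≠ b i)).card ≤ k →
      (∀ i, a i ≤ b i) → f a = true → f b = false →
      ∃ (a' : Fin n → Bool) (j : Fin n), a' j = false ∧ f a' = true ∧
        f (Function.update a' j true) = false := by
  intro k
  induction k with
  | zero =>
    intro a b hcard hle hfa hfb
    exfalso
    have hab : a = b := by
      funext i
      by_contra hi
      have hmem : i ∈ Finset.univ.filter (fun i => a i ≠ b i) := by simp [hi]
      have := Finset.card_pos.mpr ⟨i, hmem⟩
      omega
    rw [hab, hfb] at hfa
    cases hfa
  | succ k ih =>
    intro a b hcard hle hfa hfb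
    by_cases hab : a = b
    · rw [hab, hfb] at hfa; cases hfa
    · have hex : ∃ j, a j ≠ b j := by
        by_contra h
        push_neg at h
        exact hab (funext h)
      obtain ⟨j, hj⟩ := hex
      have haj : a j = false := by
        cases h1 : a j
        · rfl
        · exfalso
          have hb := hle j
          rw [h1] at hb
          cases h2 : b j
          · rw [h2] at hb; exact absurd hb (by decide)
          · exact hj (h1.trans h2.symm)
      have hbj : b j = true := by
        cases h2 : b j
        · exact absurd (haj.trans h2.symm) hj
        · rfl
      by_cases hfa' : f (Function.update a j true) = true
      · apply ih (Function.update a j true) b ?_ ?_ hfa' hfb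
        · have hsub : (Finset.univ.filter (fun i => Function.update a j true i ≠ b i)) ⊆
              (Finset.univ.filter (fun i => a i ≠ b i)).erase j := by
            intro i hi
            simp only [Finset.mem_filter, Finset.mem_univ, true_and] at hi
            rcases eq_or_ne i j with rfl | hij
            · rw [Function.update_self] at hi
              exact absurd hbj.symm hi
            · rw [Function.update_of_ne hij] at hi
              exact Finset.mem_erase.mpr ⟨hij, by simp [hi]⟩
          have hjmem : j ∈ Finset.univ.filter (fun i => a i ≠ b i) := by simp [hj]
          have hcc := Finset.card_le_card hsub
          rw [Finset.card_erase_of_mem hjmem] at hcc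
          omega
        · intro i
          rcases eq_or_ne i j with rfl | hij
          · rw [Function.update_self, hbj]
          · rw [Function.update_of_ne hij]; exact hle i
      · exact ⟨a, j, haj, hfa, by simpa using hfa'⟩

lemma core {C : Type} {ar : C → ℕ} (tf : (c : C) → (Fin (ar c) → Bool) → Bool)
    (c : C) (a : Fin (ar c) → Bool) (j : Fin (ar c))
    (tfA : tf c (fun i => if i = j then false else if a i then true else false) = true)
    (tfB : tf c (fun i => if i = j then true else if a i then true else false) = false)
    (tfT : tf c (fun i => if i = j then true else if a i then true else true) = true)
    (δ : Formula C ar) (hδp : IsPropC c δ)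
    (hδc : ∀ (M : CModel) (ρ : ℕ → M.U),
      cVal tf M (At C ar 0) ρ = true → cVal tf M δ ρ = true)
    (hδk : kVal tf KM δ false (fun _ => ()) = false) :
    ∃ φ χ : Formula C ar, IsPropC c φ ∧ IsPropC c χ ∧
      SeqCValid tf {φ} {χ} ∧ ¬ SeqCDValid tf {φ} {χ} := by
  refine ⟨At C ar 0, mkK c a j (At C ar 0) δ
      (mkK c a j (At C ar 0) (At C ar 1) (At C ar 1)),
    isPropC_At c 0,
    isPropC_mkK a j (isPropC_At c 0) hδp
      (isPropC_mkK a j (isPropC_At c 0) (isPropC_At c 1) (isPropC_At c 1)), ?_, ?_⟩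
  · -- classical validity
    rintro M ρ hρ ⟨hΓ, hΔ⟩
    have hq : cVal tf M (At C ar 0) ρ = true := hΓ _ rfl
    have hχv : cVal tf M (mkK c a j (At C ar 0) δ
        (mkK c a j (At C ar 0) (At C ar 1) (At C ar 1))) ρ = false := hΔ _ rfl
    have hδ'v : cVal tf M (mkK c a j (At C ar 0) (At C ar 1) (At C ar 1)) ρ = true := by
      rw [cVal_mkK]
      cases hr : cVal tf M (At C ar 1) ρ
      · simp only [hq, hr]; exact tfA
      · simp only [hq, hr]; exact tfT
    have hδv := hδc M ρ hq
    rw [cVal_mkK] at hχv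
    simp only [hq, hδv, hδ'v] at hχv
    rw [tfT] at hχv
    cases hχv
  · -- failure in the Kripke model KM
    intro h
    have hqk : ∀ u : Bool, kVal tf KM (At C ar 0) u (fun _ => ()) = true := by
      intro u; rw [kAt]; simp
    have hrk : ∀ u : Bool, kVal tf KM (At C ar 1) u (fun _ => ()) = false := by
      intro u; rw [kAt]; simp
    have hδ'k : ∀ u : Bool, kVal tf KM
        (mkK c a j (At C ar 0) (At C ar 1) (At C ar 1)) u (fun _ => ()) = true := by
      intro u
      rw [kVal_mkK]; simp only [decide_eq_true_eq]
      intro u' hu'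
      simp only [hqk, hrk]
      exact tfA
    refine h KM (fun _ _ => rfl) false (fun _ => ()) (fun _ => trivial) ⟨?_, ?_⟩
    · intro ψ hψ
      rw [Set.mem_singleton_iff] at hψ
      subst hψ
      exact hqk false
    · intro ψ hψ
      rw [Set.mem_singleton_iff] at hψ
      subst hψ
      rw [kVal_mkK, decide_eq_false_iff_not]
      intro hcon
      have hc := hcon false (KM.refl false)
      simp only [hqk, hδk, hδ'k] at hc
      rw [tfB] at hc
      cases hc

lemma main {C : Type} {ar : C → ℕ} (tf : (c : C) → (Fin (ar c) → Bool) → Bool)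
    (c : C) (a : Fin (ar c) → Bool) (j : Fin (ar c))
    (haj : a j = false) (hfa : tf c a = true)
    (hfb : tf c (Function.update a j true) = false)
    (h1 : tf c (fun _ => true) = true) :
    ∃ φ χ : Formula C ar, IsPropC c φ ∧ IsPropC c χ ∧
      SeqCValid tf {φ} {χ} ∧ ¬ SeqCDValid tf {φ} {χ} := by
  have tfA : tf c (fun i => if i = j then false else if a i then true else false) = true := by
    rw [vecA a j haj]; exact hfa
  have tfB : tf c (fun i => if i = j then true else if a i then true else false) = false := by
    rw [vecB a j]; exact hfb
  have tfT : tf c (fun i => if i = j then true else if a i then true else true) = true := by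
    rw [vecT a j]; exact h1
  have hqk : ∀ u : Bool, kVal tf KM (At C ar 0) u (fun _ => ()) = true := by
    intro u; rw [kAt]; simp
  have hrk : ∀ u : Bool, kVal tf KM (At C ar 1) u (fun _ => ()) = false := by
    intro u; rw [kAt]; simp
  have hpk : ∀ u : Bool, kVal tf KM (At C ar 2) u (fun _ => ()) = u := by
    intro u; rw [kAt]; simp
  have hsk : ∀ u : Bool, kVal tf KM (At C ar 3) u (fun _ => ()) = false := by
    intro u; rw [kAt]; simp
  cases hu4 : tf c (fun i => if i = j then false else if a i then true else true)
  · -- u4 = false : use δ = ¬¬p → p coded as K(q, ¬¬p, p) with ¬x = K(q,r,x)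
    refine core tf c a j tfA tfB tfT
      (mkK c a j (At C ar 0)
        (mkK c a j (At C ar 0) (At C ar 1) (mkK c a j (At C ar 0) (At C ar 1) (At C ar 2)))
        (At C ar 2)) ?_ ?_ ?_
    · exact isPropC_mkK a j (isPropC_At c 0)
        (isPropC_mkK a j (isPropC_At c 0) (isPropC_At c 1)
          (isPropC_mkK a j (isPropC_At c 0) (isPropC_At c 1) (isPropC_At c 2)))
        (isPropC_At c 2)
    · -- classical: value is true whenever q is true
      intro M ρ hq
      have e : ∀ (y z : Formula C ar) (Y Z : Bool), cVal tf M y ρ = Y → cVal tf M z ρ = Z →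
          cVal tf M (mkK c a j (At C ar 0) y z) ρ
            = tf c (fun i => if i = j then Z else if a i then true else Y) := by
        intro y z Y Z hy hz
        rw [cVal_mkK]
        simp only [hq, hy, hz]
      cases hv1 : cVal tf M (At C ar 1) ρ <;> cases hv2 : cVal tf M (At C ar 2) ρ
      · have h3 := e _ _ _ _ hv1 hv2; rw [tfA] at h3
        have h4 := e _ _ _ _ hv1 h3; rw [tfB] at h4
        have h5 := e _ _ _ _ h4 hv2; rw [tfA] at h5; exact h5
      · have h3 := e _ _ _ _ hv1 hv2; rw [tfB] at h3
        have h4 := e _ _ _ _ hv1 h3; rw [tfA] at h4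
        have h5 := e _ _ _ _ h4 hv2; rw [tfT] at h5; exact h5
      · have h3 := e _ _ _ _ hv1 hv2; rw [hu4] at h3
        have h4 := e _ _ _ _ hv1 h3; rw [hu4] at h4
        have h5 := e _ _ _ _ h4 hv2; rw [tfA] at h5; exact h5
      · have h3 := e _ _ _ _ hv1 hv2; rw [tfT] at h3
        have h4 := e _ _ _ _ hv1 h3; rw [tfT] at h4
        have h5 := e _ _ _ _ h4 hv2; rw [tfT] at h5; exact h5
    · -- Kripke: fails at the root
      have hNPk : ∀ u : Bool, kVal tf KM
          (mkK c a j (At C ar 0) (At C ar 1) (At C ar 2)) u (fun _ => ()) = false := by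
        intro u
        rw [kVal_mkK, decide_eq_false_iff_not]
        intro hcon
        have hc := hcon true (show u ≤ true from Bool.le_true u)
        simp only [hqk, hrk, hpk] at hc
        rw [tfB] at hc
        cases hc
      have hNNPk : ∀ u : Bool, kVal tf KM
          (mkK c a j (At C ar 0) (At C ar 1)
            (mkK c a j (At C ar 0) (At C ar 1) (At C ar 2))) u (fun _ => ()) = true := by
        intro u
        rw [kVal_mkK]; simp only [decide_eq_true_eq]
        intro u' hu'
        simp only [hqk, hrk, hNPk]
        exact tfA
      rw [kVal_mkK, decide_eq_false_iff_not]
      intro hcon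
      have hc := hcon false (KM.refl false)
      simp only [hqk, hpk, hNNPk] at hc
      rw [hu4] at hc
      cases hc
  · -- u4 = true : use Peirce's law ((p → s) → p) → p with z → y coded as K(q,y,z)
    refine core tf c a j tfA tfB tfT
      (mkK c a j (At C ar 0) (At C ar 2)
        (mkK c a j (At C ar 0) (At C ar 2)
          (mkK c a j (At C ar 0) (At C ar 3) (At C ar 2)))) ?_ ?_ ?_
    · exact isPropC_mkK a j (isPropC_At c 0) (isPropC_At c 2)
        (isPropC_mkK a j (isPropC_At c 0) (isPropC_At c 2)
          (isPropC_mkK a j (isPropC_At c 0) (isPropC_At c 3) (isPropC_At c 2)))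
    · intro M ρ hq
      have e : ∀ (y z : Formula C ar) (Y Z : Bool), cVal tf M y ρ = Y → cVal tf M z ρ = Z →
          cVal tf M (mkK c a j (At C ar 0) y z) ρ
            = tf c (fun i => if i = j then Z else if a i then true else Y) := by
        intro y z Y Z hy hz
        rw [cVal_mkK]
        simp only [hq, hy, hz]
      cases hv2 : cVal tf M (At C ar 2) ρ <;> cases hv3 : cVal tf M (At C ar 3) ρ
      · have h3 := e _ _ _ _ hv3 hv2; rw [tfA] at h3
        have h4 := e _ _ _ _ hv2 h3; rw [tfB] at h4
        have h5 := e _ _ _ _ hv2 h4; rw [tfA] at h5; exact h5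
      · have h3 := e _ _ _ _ hv3 hv2; rw [hu4] at h3
        have h4 := e _ _ _ _ hv2 h3; rw [tfB] at h4
        have h5 := e _ _ _ _ hv2 h4; rw [tfA] at h5; exact h5
      · have h3 := e _ _ _ _ hv3 hv2; rw [tfB] at h3
        have h4 := e _ _ _ _ hv2 h3; rw [hu4] at h4
        have h5 := e _ _ _ _ hv2 h4; rw [tfT] at h5; exact h5
      · have h3 := e _ _ _ _ hv3 hv2; rw [tfT] at h3
        have h4 := e _ _ _ _ hv2 h3; rw [tfT] at h4
        have h5 := e _ _ _ _ hv2 h4; rw [tfT] at h5; exact h5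
    · have hA1k : ∀ u : Bool, kVal tf KM
          (mkK c a j (At C ar 0) (At C ar 3) (At C ar 2)) u (fun _ => ()) = false := by
        intro u
        rw [kVal_mkK, decide_eq_false_iff_not]
        intro hcon
        have hc := hcon true (show u ≤ true from Bool.le_true u)
        simp only [hqk, hsk, hpk] at hc
        rw [tfB] at hc
        cases hc
      have hA2k : ∀ u : Bool, kVal tf KM
          (mkK c a j (At C ar 0) (At C ar 2)
            (mkK c a j (At C ar 0) (At C ar 3) (At C ar 2))) u (fun _ => ()) = true := by
        intro u
        rw [kVal_mkK]; simp only [decide_eq_true_eq]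
        intro u' hu'
        simp only [hqk, hA1k, hpk]
        cases u'
        · exact tfA
        · exact hu4
      rw [kVal_mkK, decide_eq_false_iff_not]
      intro hcon
      have hc := hcon false (KM.refl false)
      simp only [hqk, hA2k, hpk] at hc
      rw [tfB] at hc
      cases hc

end Stmt14Aux

/-- if `c` is non-monotonic with `f_c(0,…,0) = 0` and
`f_c(1,…,1) = 1`, then some sequent `φ ⟹ χ` of propositional formulas built
only from propositional symbols and `c` is in `FOCLS(𝒞) \ FOCDS(𝒞)`. -/
theorem stmt_14 (C : Type) (ar : C → ℕ) (tf : (c : C) → (Fin (ar c) → Bool) → Bool)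
    (c : C) (hnm : ¬ MonoTF (tf c))
    (h0 : tf c (fun _ => false) = false) (h1 : tf c (fun _ => true) = true) :
    ∃ φ χ : Formula C ar, IsPropC c φ ∧ IsPropC c χ ∧
      SeqCValid tf {φ} {χ} ∧ ¬ SeqCDValid tf {φ} {χ} := by
  obtain ⟨a0, b0, hle, hlt⟩ : ∃ a b : Fin (ar c) → Bool,
      (∀ i, a i ≤ b i) ∧ tf c b < tf c a := by
    unfold MonoTF at hnm
    push_neg at hnm
    exact hnm
  have hfa0 : tf c a0 = true := by
    cases h : tf c a0
    · exfalso
      rw [h] at hlt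
      cases h2 : tf c b0 <;> rw [h2] at hlt <;> exact absurd hlt (by decide)
    · rfl
  have hfb0 : tf c b0 = false := by
    cases h : tf c b0
    · rfl
    · exfalso
      rw [h] at hlt
      cases h2 : tf c a0 <;> rw [h2] at hlt <;> exact absurd hlt (by decide)
  obtain ⟨a, j, haj, hfa, hfb⟩ := Stmt14Aux.exists_adjacent (tf c)
    ((Finset.univ.filter (fun i => a0 i ≠ b0 i)).card) a0 b0 le_rfl hle hfa0 hfb0
  exact Stmt14Aux.main tf c a j haj hfa hfb h1
end
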